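/- Let T be a sequential topological space, H an arbitrary topological space, and f : T → H a function. Then f is continuous if and only if for every continuous map g : OnePoint ℕ → T, the composition f ∘ g is continuous. -/
import Mathlib

theorem stmt13 (T : Type*) [TopologicalSpace T] [SequentialSpace T]
    (H : Type*) [TopologicalSpace H] (f : T → H) :
    Continuous f ↔ ∀ g : OnePoint ℕ → T, Continuous g → Continuous (f ∘ g) := by
  constructor
  · exact fun hf g hg => hf.comp hg
  · intro h
    rw [continuous_iff_seqContinuous]
    intro u x hu
    set g : OnePoint ℕ → T := fun n => OnePoint.rec x u n with hg
    have hgc : Continuous g := by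
      rw [OnePoint.continuous_iff_from_nat]
      exact hu
    have := h g hgc
    rw [OnePoint.continuous_iff_from_nat] at this
    exact this
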